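/- Let R be a finite proper nearfield, k ≥ 1, and n > (|R|^k − 1)/(|R| − 1). Then for any v_1,…,v_k ∈ R^n, the smallest R-subgroup of R^n containing v_1,…,v_k is a proper subset of R^n. In other words, k vectors cannot generate R^n when n exceeds (|R|^k − 1)/(|R| − 1). -/
import Mathlib


open scoped BigOperators

/-- A (left) nearfield: a zero-symmetric (left) nearring whose nonzero
elements form a multiplicative group. The additive group is abelian. -/
class Nearfield (R : Type*) extends AddCommGroup R, One R, Mul R, Inv R where
  protected mul_assoc : ∀ a b c : R, a * b * c = a * (b * c)
  protected left_distrib : ∀ a b c : R, a * (b + c) = a * b + a * c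
  protected zero_mul : ∀ a : R, (0 : R) * a = 0
  protected mul_zero : ∀ a : R, a * (0 : R) = 0
  protected one_mul : ∀ a : R, (1 : R) * a = a
  protected mul_one : ∀ a : R, a * (1 : R) = a
  protected one_ne_zero : (1 : R) ≠ 0
  protected mul_inv_cancel : ∀ a : R, a ≠ 0 → a * a⁻¹ = 1
  protected inv_mul_cancel : ∀ a : R, a ≠ 0 → a⁻¹ * a = 1

namespace Nearfield

/-- A nearfield is proper if it is not a skewfield (right distributivity fails). -/
def IsProper (R : Type*) [Nearfield R] : Prop :=
  ∃ a b c : R, (a + b) * c ≠ a * c + b * c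

variable {R : Type*} [Nearfield R]

/-- Right scalar multiplication on `R^n`, applied coordinatewise. -/
def vsmul {n : ℕ} (v : Fin n → R) (r : R) : Fin n → R := fun i => v i * r

/-- An `R`-subgroup of `R^n`: an additive subgroup closed under right scalar
multiplication. -/
def IsRSubgroup {n : ℕ} (H : Set (Fin n → R)) : Prop :=
  (0 : Fin n → R) ∈ H ∧ (∀ x ∈ H, ∀ y ∈ H, x + y ∈ H) ∧
    (∀ x ∈ H, -x ∈ H) ∧ (∀ x ∈ H, ∀ r : R, vsmul x r ∈ H)

/-- `gen S` is the smallest `R`-subgroup containing `S`. -/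
def gen {n : ℕ} (S : Set (Fin n → R)) : Set (Fin n → R) :=
  ⋂₀ {H : Set (Fin n → R) | IsRSubgroup H ∧ S ⊆ H}

/-- The support of a vector. -/
def supp {n : ℕ} (u : Fin n → R) : Set (Fin n) := {i | u i ≠ 0}

/-- `dirSum u = { Σ_i u_i r_i : r_i ∈ R }`. -/
def dirSum {n ℓ : ℕ} (u : Fin ℓ → Fin n → R) : Set (Fin n → R) :=
  {v | ∃ r : Fin ℓ → R, v = ∑ i, vsmul (u i) (r i)}

/-- The "scalar product" `⟨x,y⟩ = Σ_i x_i·y_i`. -/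
def dot {n : ℕ} (x y : Fin n → R) : R := ∑ i, x i * y i

/-- The weight of a vector: the number of its nonzero coordinates. -/
noncomputable def weight {n : ℕ} (u : Fin n → R) : ℕ := (supp u).ncard

/-- A vector is simple if it has weight one or two. -/
def IsSimple {n : ℕ} (u : Fin n → R) : Prop := weight u = 1 ∨ weight u = 2

/-- The orthogonal set `D^⊥`. -/
def perp {n : ℕ} (D : Set (Fin n → R)) : Set (Fin n → R) :=
  {x | ∀ e ∈ D, dot e x = 0}

/-- `c(k,R)`: nonzero vectors of `R^k` whose first nonzero coordinate is `1`. -/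
def cSet (R : Type*) [Nearfield R] (k : ℕ) : Set (Fin k → R) :=
  {u | ∃ i : Fin k, u i = 1 ∧ ∀ j : Fin k, j < i → u j = 0}

/-- The seed number of `T`: the least size of a set generating `T`. -/
noncomputable def seed {n : ℕ} (T : Set (Fin n → R)) : ℕ :=
  sInf {k | ∃ S : Finset (Fin n → R), S.card = k ∧ gen (↑S : Set (Fin n → R)) = T}

/-- Iterated linear-combination closures. -/
def LC {n : ℕ} (S : Set (Fin n → R)) : ℕ → Set (Fin n → R)
  | 0 => S
  | m + 1 => {v | ∃ (ℓ : ℕ) (w : Fin ℓ → Fin n → R) (lam : Fin ℓ → R),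
      (∀ i, w i ∈ LC S m) ∧ v = ∑ i, vsmul (w i) (lam i)}

end Nearfield

/-- Stirling numbers of the second kind. -/
def stirling2 : ℕ → ℕ → ℕ
  | 0, 0 => 1
  | 0, _ + 1 => 0
  | _ + 1, 0 => 0
  | n + 1, k + 1 => (k + 1) * stirling2 n (k + 1) + stirling2 n k

open Nearfield

section Aux

variable {R : Type*} [Nearfield R]

private lemma nf_mul_neg (a b : R) : a * (-b) = -(a * b) := by
  have h := Nearfield.left_distrib a b (-b)
  rw [add_neg_cancel, Nearfield.mul_zero] at h
  exact (neg_eq_of_add_eq_zero_right h.symm).symm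

/-- The "column-proportionality" subgroup `{x | x q = d * x p}`. -/
private lemma isRSubgroup_prop {n : ℕ} (p q : Fin n) (d : R) :
    IsRSubgroup {x : Fin n → R | x q = d * x p} := by
  refine ⟨?_, ?_, ?_, ?_⟩
  · show (0 : R) = d * (0 : R)
    rw [Nearfield.mul_zero]
  · intro x hx y hy
    show x q + y q = d * (x p + y p)
    rw [Nearfield.left_distrib, hx, hy]
  · intro x hx
    show -(x q) = d * (-(x p))
    rw [nf_mul_neg, hx]
  · intro x hx r
    show x q * r = d * (x p * r)
    rw [← Nearfield.mul_assoc, ← hx]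

/-- The coordinate-vanishing subgroup `{x | x p = 0}`. -/
private lemma isRSubgroup_coord {n : ℕ} (p : Fin n) :
    IsRSubgroup {x : Fin n → R | x p = 0} := by
  refine ⟨rfl, ?_, ?_, ?_⟩
  · intro x hx y hy
    show x p + y p = 0
    rw [Set.mem_setOf_eq.mp hx, Set.mem_setOf_eq.mp hy, add_zero]
  · intro x hx
    show -(x p) = 0
    rw [Set.mem_setOf_eq.mp hx, neg_zero]
  · intro x hx r
    show x p * r = 0
    rw [Set.mem_setOf_eq.mp hx, Nearfield.zero_mul]

private lemma gen_subset {n : ℕ} {S H : Set (Fin n → R)} (hH : IsRSubgroup H)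
    (hSH : S ⊆ H) : gen S ⊆ H := fun _ hx => hx H ⟨hH, hSH⟩

end Aux


/-- For a finite proper nearfield, `k` vectors cannot generate `R^n` when
`n > (|R|^k − 1)/(|R| − 1)`. -/
theorem gen_ne_univ_of_large_dim {R : Type*} [Nearfield R] [Fintype R]
    (hR : IsProper R) {k n : ℕ} (hk : 1 ≤ k)
    (hn : (Fintype.card R ^ k - 1) / (Fintype.card R - 1) < n)
    (v : Fin k → Fin n → R) :
    gen (Set.range v) ≠ Set.univ := by
  -- `q` is the cardinality of `R`; it is at least 2.
  classical
  set Q := Fintype.card R with hQ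
  haveI : Nontrivial R := ⟨1, 0, Nearfield.one_ne_zero⟩
  have hQ2 : 2 ≤ Q := Fintype.one_lt_card
  -- It suffices to find a proper R-subgroup containing all the `v j`.
  suffices h : ∃ H : Set (Fin n → R), IsRSubgroup H ∧ Set.range v ⊆ H ∧ H ≠ Set.univ by
    obtain ⟨H, hH, hvH, hne⟩ := h
    intro hgen
    exact hne (Set.eq_univ_of_univ_subset (hgen ▸ gen_subset hH hvH))
  by_cases hA : ∃ p : Fin n, ∀ j : Fin k, v j p = 0
  · -- some column is zero
    obtain ⟨p, hp⟩ := hA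
    refine ⟨{x | x p = 0}, isRSubgroup_coord p, ?_, ?_⟩
    · rintro x ⟨j, rfl⟩; exact hp j
    · intro hu
      have : (Pi.single p 1 : Fin n → R) ∈ {x : Fin n → R | x p = 0} := by
        rw [hu]; trivial
      have : (Pi.single p 1 : Fin n → R) p = 0 := this
      rw [Pi.single_eq_same] at this
      exact Nearfield.one_ne_zero this
  push_neg at hA
  -- all columns nonzero: pigeonhole on normalized columns
  -- `lead p` : the least index where the column at `p` is nonzero
  have hne : ∀ p : Fin n, (Finset.univ.filter (fun j => v j p ≠ 0)).Nonempty := by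
    intro p
    obtain ⟨j, hj⟩ := hA p
    exact ⟨j, by simp [hj]⟩
  set lead : Fin n → Fin k := fun p => (Finset.univ.filter (fun j => v j p ≠ 0)).min' (hne p)
    with hlead
  have hlead_ne : ∀ p, v (lead p) p ≠ 0 := by
    intro p
    have := Finset.min'_mem _ (hne p)
    simpa using this
  have hlead_lt : ∀ p, ∀ j : Fin k, j < lead p → v j p = 0 := by
    intro p j hj
    by_contra hj0
    exact absurd (Finset.min'_le _ j (by simp [hj0])) (not_le.mpr hj)
  -- the pigeonhole target type
  let T := Σ i : Fin k, (↥(Finset.Ioi i) → R)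
  have hcardT : Fintype.card T = (Q ^ k - 1) / (Q - 1) := by
    rw [Fintype.card_sigma]
    have h1 : ∀ i : Fin k, Fintype.card (↥(Finset.Ioi i) → R) = Q ^ (k - 1 - (i : ℕ)) := by
      intro i
      rw [Fintype.card_fun, Fintype.card_coe, Fin.card_Ioi]
    simp_rw [h1]
    rw [Fin.sum_univ_eq_sum_range (fun i => Q ^ (k - 1 - i)) k,
      Finset.sum_range_reflect (fun i => Q ^ i) k, Nat.geomSum_eq hQ2]
  -- the normalization map
  let ψ : Fin n → T := fun p =>
    ⟨lead p, fun j => (v (lead p) p)⁻¹ * v j.1 p⟩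
  have hcard : Fintype.card T < Fintype.card (Fin n) := by
    rw [hcardT, Fintype.card_fin]; exact hn
  obtain ⟨p, q, hpq, hψ⟩ := Fintype.exists_ne_map_eq_of_card_lt ψ hcard
  have hi : lead p = lead q := congrArg Sigma.fst hψ
  have hlam_ne : v (lead p) p ≠ 0 := hlead_ne p
  have hmu_ne : v (lead p) q ≠ 0 := by rw [hi]; exact hlead_ne q
  -- second components agree
  have hsnd : ∀ j : Fin k, lead p < j →
      (v (lead p) p)⁻¹ * v j p = (v (lead p) q)⁻¹ * v j q := by
    intro j hj
    have h2 : HEq (fun j : ↥(Finset.Ioi (lead p)) => (v (lead p) p)⁻¹ * v j.1 p)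
        (fun j : ↥(Finset.Ioi (lead q)) => (v (lead q) q)⁻¹ * v j.1 q) :=
      (Sigma.mk.inj_iff.mp hψ).2
    rw [← hi] at h2
    simpa using congrFun (eq_of_heq h2) ⟨j, Finset.mem_Ioi.mpr hj⟩
  set d := v (lead p) q * (v (lead p) p)⁻¹ with hd
  -- all columns proportional: v j q = d * v j p
  have hprop : ∀ j : Fin k, v j q = d * v j p := by
    intro j
    rcases lt_trichotomy j (lead p) with h | h | h
    · rw [hlead_lt p j h, hlead_lt q j (hi ▸ h), Nearfield.mul_zero]
    · subst h
      rw [hd, Nearfield.mul_assoc, Nearfield.inv_mul_cancel _ hlam_ne, Nearfield.mul_one]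
    · have h4 := hsnd j h
      have h5 : v (lead p) q * ((v (lead p) q)⁻¹ * v j q) = v j q := by
        rw [← Nearfield.mul_assoc, Nearfield.mul_inv_cancel _ hmu_ne, Nearfield.one_mul]
      rw [← h5, ← h4, hd, Nearfield.mul_assoc]
  -- p ≠ q
  have hpq' : p ≠ q := by
    intro h; subst h
    apply hpq
    rfl
  refine ⟨{x | x q = d * x p}, isRSubgroup_prop p q d, ?_, ?_⟩
  · rintro x ⟨j, rfl⟩; exact hprop j
  · intro hu
    have hx : (Pi.single q 1 : Fin n → R) ∈ {x : Fin n → R | x q = d * x p} := by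
      rw [hu]; trivial
    have hx : (Pi.single q 1 : Fin n → R) q = d * (Pi.single q 1 : Fin n → R) p := hx
    rw [Pi.single_eq_same, Pi.single_eq_of_ne hpq', Nearfield.mul_zero] at hx
    exact Nearfield.one_ne_zero hx
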